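/- Let m ≥ 3, n ≥ 7, and let S be a self-identifying code of K_m × P_n. Then for every j with 3 ≤ j ≤ n−4, the union of three consecutive columns satisfies |(C_{j−1} ∪ C_j ∪ C_{j+1}) ∩ S| ≥ m + 2. -/

import Mathlib

open SimpleGraph Set

/-- Closed neighborhood of a vertex. -/
def cNbr {V : Type*} (G : SimpleGraph V) (v : V) : Set V := insert v (G.neighborSet v)

/-- `S` is a self-identifying code of `G`. -/
def IsSID {V : Type*} (G : SimpleGraph V) (S : Set V) : Prop :=
  S.Nonempty ∧ ∀ v : V, (cNbr G v ∩ S).Nonempty ∧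
    (⋂ c ∈ cNbr G v ∩ S, cNbr G c) = {v}

/-- Minimum cardinality of a self-identifying code. -/
noncomputable def gammaSID {V : Type*} (G : SimpleGraph V) : ℕ :=
  sInf {k | ∃ S : Set V, IsSID G S ∧ S.ncard = k}

/-- Direct product of the complete graph `K_m` with the path `P_n`. -/
def KmPn (m n : ℕ) : SimpleGraph (Fin m × Fin n) where
  Adj u w := u.1 ≠ w.1 ∧ ((u.2 : ℕ) + 1 = (w.2 : ℕ) ∨ (w.2 : ℕ) + 1 = (u.2 : ℕ))
  symm := ⟨fun u w h => ⟨h.1.symm, h.2.symm⟩⟩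
  loopless := ⟨fun u h => h.1 rfl⟩

/-- Direct product of the complete graph `K_m` with the cycle `C_n`. -/
def KmCn (m n : ℕ) : SimpleGraph (Fin m × ZMod n) where
  Adj u w := u.1 ≠ w.1 ∧ (u.2 + 1 = w.2 ∨ w.2 + 1 = u.2)
  symm := ⟨fun u w h => ⟨h.1.symm, h.2.symm⟩⟩
  loopless := ⟨fun u h => h.1 rfl⟩

/-- In a self-identifying code, every vertex `v` is separated from every `w ≠ v` by a codeword
in its closed neighborhood. -/
lemma sep_of_isSID {V : Type*} {G : SimpleGraph V} {S : Set V} (hS : IsSID G S)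
    (v w : V) (hvw : w ≠ v) : ∃ c, c ∈ cNbr G v ∧ c ∈ S ∧ w ∉ cNbr G c := by
  obtain ⟨-, h2⟩ := hS
  obtain ⟨-, hint⟩ := h2 v
  by_contra hc
  push_neg at hc
  have hw : w ∈ ⋂ c ∈ cNbr G v ∩ S, cNbr G c := by
    rw [Set.mem_iInter₂]
    intro c hc'
    exact hc c hc'.1 hc'.2
  rw [hint] at hw
  exact hvw hw

lemma mem_cNbr_KmPn {m n : ℕ} {v c : Fin m × Fin n} :
    c ∈ cNbr (KmPn m n) v ↔
      c = v ∨ (v.1 ≠ c.1 ∧ ((v.2 : ℕ) + 1 = (c.2 : ℕ) ∨ (c.2 : ℕ) + 1 = (v.2 : ℕ))) :=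
  Iff.rfl

open Classical in
/-- Rows of column `q` whose vertex lies in `S`. -/
noncomputable def rowSet {m n : ℕ} (S : Set (Fin m × Fin n)) (q : Fin n) : Finset (Fin m) :=
  Finset.univ.filter (fun r => (r, q) ∈ S)

lemma mem_rowSet {m n : ℕ} {S : Set (Fin m × Fin n)} {q : Fin n} {r : Fin m} :
    r ∈ rowSet S q ↔ (r, q) ∈ S := by
  classical simp [rowSet]

/-- The abstract counting lemma: the six separation constraints force `|A|+|B|+|C| ≥ m+2`. -/
lemma keyCount (m : ℕ) (hm : 3 ≤ m) (A B C : Finset (Fin m))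
    (hA : ∀ i : Fin m, i ∈ B ∨ ∃ t, t ∈ C ∧ t ≠ i)
    (hB : ∀ i : Fin m, i ∈ B ∨ ∃ t, t ∈ A ∧ t ≠ i)
    (hC : ∀ i i' : Fin m, i ≠ i' → i ∈ B ∨ i' ∈ A ∨ i' ∈ C)
    (hD : ∀ i : Fin m, i ∈ A ∨ ∃ t, t ∈ B ∧ t ≠ i)
    (hE : ∀ i : Fin m, i ∈ C ∨ ∃ t, t ∈ B ∧ t ≠ i)
    (hH : ∀ i i' : Fin m, i ≠ i' →
      (∃ t, t ∈ A ∧ t ≠ i) ∨ (∃ t, t ∈ C ∧ t ≠ i ∧ t ≠ i')) :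
    m + 2 ≤ A.card + B.card + C.card := by
  have hH2 : ∀ i : Fin m, (∃ t, t ∈ A ∧ t ≠ i) ∨ 2 ≤ C.card := by
    intro i
    by_cases h : ∃ t, t ∈ A ∧ t ≠ i
    · exact Or.inl h
    · right
      have h1 : 1 < Fintype.card (Fin m) := by simp; omega
      obtain ⟨i1, hi1⟩ := Fintype.exists_ne_of_one_lt_card h1 i
      obtain ⟨t, htC, _, _⟩ := (hH i i1 (Ne.symm hi1)).resolve_left h
      obtain ⟨t', ht'C, _, ht't⟩ := (hH i t (by tauto)).resolve_left h
      exact Finset.one_lt_card.mpr ⟨t, htC, t', ht'C, fun e => ht't e.symm⟩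
  have hsmallA : A.card ≤ 1 → 2 ≤ C.card := by
    intro h
    have hle : ∀ a ∈ A, ∀ b ∈ A, a = b := Finset.card_le_one.mp h
    obtain ⟨i, hi⟩ : ∃ i : Fin m, ∀ t ∈ A, t = i := by
      rcases A.eq_empty_or_nonempty with he | ⟨x, hx⟩
      · exact ⟨⟨0, by omega⟩, by simp [he]⟩
      · exact ⟨x, fun t ht => hle t ht x hx⟩
    refine (hH2 i).resolve_left ?_
    rintro ⟨t, htA, hti⟩
    exact hti (hi t htA)
  by_cases hBu : B = Finset.univ
  · have hb : B.card = m := by rw [hBu]; simp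
    have hac : 2 ≤ A.card + C.card := by
      rcases Nat.lt_or_ge A.card 2 with h | h
      · have := hsmallA (by omega); omega
      · omega
    omega
  · obtain ⟨i0, hi0⟩ : ∃ i, i ∉ B := by
      by_contra h; push_neg at h; exact hBu (Finset.eq_univ_iff_forall.mpr h)
    have ha1 : 1 ≤ A.card := by
      obtain ⟨t, ht, -⟩ := (hB i0).resolve_left hi0
      exact Finset.card_pos.mpr ⟨t, ht⟩
    have hc1 : 1 ≤ C.card := by
      obtain ⟨t, ht, -⟩ := (hA i0).resolve_left hi0
      exact Finset.card_pos.mpr ⟨t, ht⟩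
    have hQ1 : 3 ≤ A.card + C.card := by
      rcases Nat.lt_or_ge A.card 2 with h | h
      · have := hsmallA (by omega); omega
      · omega
    have hblt : B.card < m := by
      have := Finset.card_lt_card (Finset.ssubset_univ_iff.mpr hBu)
      simpa using this
    rcases Nat.lt_or_ge B.card (m - 1) with hb2 | hb2
    · have hsd : 2 ≤ (Finset.univ \ B).card := by
        rw [Finset.card_sdiff_of_subset (Finset.subset_univ B)]
        simp; omega
      obtain ⟨i1, hi1, i2, hi2, hne12⟩ :=
        Finset.one_lt_card.mp (by omega : 1 < (Finset.univ \ B).card)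
      rw [Finset.mem_sdiff] at hi1 hi2
      have hAC : Finset.univ ⊆ A ∪ C := by
        intro x _
        rcases eq_or_ne x i1 with rfl | hx
        · rcases (hC i2 x (Ne.symm hne12)).resolve_left hi2.2 with h | h <;>
            simp [Finset.mem_union, h]
        · rcases (hC i1 x (Ne.symm hx)).resolve_left hi1.2 with h | h <;>
            simp [Finset.mem_union, h]
      have hACcard : m ≤ (A ∪ C).card := by
        have := Finset.card_le_card hAC
        simpa using this
      have hACle : (A ∪ C).card ≤ A.card + C.card := Finset.card_union_le _ _
      rcases Nat.lt_or_ge B.card 2 with hb3 | hb3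
      · rcases Nat.eq_zero_or_pos B.card with hb0 | hb01
        · have hBe : B = ∅ := Finset.card_eq_zero.mp hb0
          have hAu : A = Finset.univ := by
            refine Finset.eq_univ_iff_forall.mpr fun i => (hD i).resolve_right ?_
            rintro ⟨t, ht, -⟩; simp [hBe] at ht
          have hCu : C = Finset.univ := by
            refine Finset.eq_univ_iff_forall.mpr fun i => (hE i).resolve_right ?_
            rintro ⟨t, ht, -⟩; simp [hBe] at ht
          have h1 : A.card = m := by rw [hAu]; simp
          have h2 : C.card = m := by rw [hCu]; simp
          omega
        · have hb1 : B.card = 1 := by omega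
          obtain ⟨z, hz⟩ := Finset.card_eq_one.mp hb1
          have hzA : z ∈ A := by
            refine (hD z).resolve_right ?_
            rintro ⟨t, ht, htz⟩; rw [hz, Finset.mem_singleton] at ht; exact htz ht
          have hzC : z ∈ C := by
            refine (hE z).resolve_right ?_
            rintro ⟨t, ht, htz⟩; rw [hz, Finset.mem_singleton] at ht; exact htz ht
          have hinter : 1 ≤ (A ∩ C).card :=
            Finset.card_pos.mpr ⟨z, Finset.mem_inter.mpr ⟨hzA, hzC⟩⟩
          have hsum : (A ∪ C).card + (A ∩ C).card = A.card + C.card :=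
            Finset.card_union_add_card_inter A C
          omega
      · omega
    · omega

set_option maxHeartbeats 1600000 in
theorem stmt12 (m n : ℕ) (hm : 3 ≤ m) (hn : 7 ≤ n) (S : Set (Fin m × Fin n))
    (hS : IsSID (KmPn m n) S) (j : ℕ) (hj1 : 3 ≤ j) (hj2 : j ≤ n - 4) :
    m + 2 ≤ (({p : Fin m × Fin n | p.2 = (⟨j - 1, by omega⟩ : Fin n)} ∪
        {p : Fin m × Fin n | p.2 = (⟨j, by omega⟩ : Fin n)} ∪
        {p : Fin m × Fin n | p.2 = (⟨j + 1, by omega⟩ : Fin n)}) ∩ S).ncard := by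
  classical
  set cm1 : Fin n := ⟨j - 1, by omega⟩ with hcm1
  set c0 : Fin n := ⟨j, by omega⟩ with hc0
  set cp1 : Fin n := ⟨j + 1, by omega⟩ with hcp1
  -- constraint (A): separate (i,j) from (i,j-2)
  have conA : ∀ i : Fin m, i ∈ rowSet S c0 ∨ ∃ t, t ∈ rowSet S cp1 ∧ t ≠ i := by
    intro i
    obtain ⟨c, hcv, hcS, hcw⟩ := sep_of_isSID hS (i, c0) (i, (⟨j - 2, by omega⟩ : Fin n))
      (by intro h
          have hv : ((⟨j - 2, by omega⟩ : Fin n) : ℕ) = (c0 : ℕ) :=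
            congrArg (fun p : Fin m × Fin n => (p.2 : ℕ)) h
          have : j - 2 = j := hv
          omega)
    rw [mem_cNbr_KmPn] at hcv
    rcases hcv with rfl | ⟨hne, hcol⟩
    · exact Or.inl (mem_rowSet.mpr hcS)
    · have hne' : i ≠ c.1 := hne
      have hcol' : j + 1 = (c.2 : ℕ) ∨ (c.2 : ℕ) + 1 = j := hcol
      rcases hcol' with h1 | h1
      · right
        have hc2 : c.2 = cp1 := Fin.ext (show (c.2 : ℕ) = j + 1 by omega)
        refine ⟨c.1, mem_rowSet.mpr ?_, Ne.symm hne'⟩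
        have hc : (c.1, cp1) = c := by rw [← hc2]
        rw [hc]; exact hcS
      · exfalso
        apply hcw
        rw [mem_cNbr_KmPn]
        right
        refine ⟨Ne.symm hne', ?_⟩
        show (c.2 : ℕ) + 1 = j - 2 ∨ (j - 2) + 1 = (c.2 : ℕ)
        omega
  -- constraint (B): separate (i,j) from (i,j+2)
  have conB : ∀ i : Fin m, i ∈ rowSet S c0 ∨ ∃ t, t ∈ rowSet S cm1 ∧ t ≠ i := by
    intro i
    obtain ⟨c, hcv, hcS, hcw⟩ := sep_of_isSID hS (i, c0) (i, (⟨j + 2, by omega⟩ : Fin n))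
      (by intro h
          have hv : ((⟨j + 2, by omega⟩ : Fin n) : ℕ) = (c0 : ℕ) :=
            congrArg (fun p : Fin m × Fin n => (p.2 : ℕ)) h
          have : j + 2 = j := hv
          omega)
    rw [mem_cNbr_KmPn] at hcv
    rcases hcv with rfl | ⟨hne, hcol⟩
    · exact Or.inl (mem_rowSet.mpr hcS)
    · have hne' : i ≠ c.1 := hne
      have hcol' : j + 1 = (c.2 : ℕ) ∨ (c.2 : ℕ) + 1 = j := hcol
      rcases hcol' with h1 | h1
      · exfalso
        apply hcw
        rw [mem_cNbr_KmPn]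
        right
        refine ⟨Ne.symm hne', ?_⟩
        show (c.2 : ℕ) + 1 = j + 2 ∨ (j + 2) + 1 = (c.2 : ℕ)
        omega
      · right
        have hc2 : c.2 = cm1 := Fin.ext (show (c.2 : ℕ) = j - 1 by omega)
        refine ⟨c.1, mem_rowSet.mpr ?_, Ne.symm hne'⟩
        have hc : (c.1, cm1) = c := by rw [← hc2]
        rw [hc]; exact hcS
  -- constraint (C): separate (i,j) from (i',j)
  have conC : ∀ i i' : Fin m, i ≠ i' →
      i ∈ rowSet S c0 ∨ i' ∈ rowSet S cm1 ∨ i' ∈ rowSet S cp1 := by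
    intro i i' hii'
    obtain ⟨c, hcv, hcS, hcw⟩ := sep_of_isSID hS (i, c0) (i', c0)
      (by intro h; exact hii' (congrArg Prod.fst h).symm)
    rw [mem_cNbr_KmPn] at hcv
    rcases hcv with rfl | ⟨hne, hcol⟩
    · exact Or.inl (mem_rowSet.mpr hcS)
    · have hne' : i ≠ c.1 := hne
      have hcol' : j + 1 = (c.2 : ℕ) ∨ (c.2 : ℕ) + 1 = j := hcol
      by_cases hci' : c.1 = i'
      · right
        rcases hcol' with h1 | h1
        · right
          have hc2 : c.2 = cp1 := Fin.ext (show (c.2 : ℕ) = j + 1 by omega)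
          refine mem_rowSet.mpr ?_
          have hc : (i', cp1) = c := by rw [← hci', ← hc2]
          rw [hc]; exact hcS
        · left
          have hc2 : c.2 = cm1 := Fin.ext (show (c.2 : ℕ) = j - 1 by omega)
          refine mem_rowSet.mpr ?_
          have hc : (i', cm1) = c := by rw [← hci', ← hc2]
          rw [hc]; exact hcS
      · exfalso
        apply hcw
        rw [mem_cNbr_KmPn]
        right
        refine ⟨hci', ?_⟩
        show (c.2 : ℕ) + 1 = j ∨ j + 1 = (c.2 : ℕ)
        omega
  -- constraint (D): separate (i,j-1) from (i,j-3)
  have conD : ∀ i : Fin m, i ∈ rowSet S cm1 ∨ ∃ t, t ∈ rowSet S c0 ∧ t ≠ i := by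
    intro i
    obtain ⟨c, hcv, hcS, hcw⟩ := sep_of_isSID hS (i, cm1) (i, (⟨j - 3, by omega⟩ : Fin n))
      (by intro h
          have hv : ((⟨j - 3, by omega⟩ : Fin n) : ℕ) = (cm1 : ℕ) :=
            congrArg (fun p : Fin m × Fin n => (p.2 : ℕ)) h
          have : j - 3 = j - 1 := hv
          omega)
    rw [mem_cNbr_KmPn] at hcv
    rcases hcv with rfl | ⟨hne, hcol⟩
    · exact Or.inl (mem_rowSet.mpr hcS)
    · have hne' : i ≠ c.1 := hne
      have hcol' : (j - 1) + 1 = (c.2 : ℕ) ∨ (c.2 : ℕ) + 1 = j - 1 := hcol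
      rcases hcol' with h1 | h1
      · right
        have hc2 : c.2 = c0 := Fin.ext (show (c.2 : ℕ) = j by omega)
        refine ⟨c.1, mem_rowSet.mpr ?_, Ne.symm hne'⟩
        have hc : (c.1, c0) = c := by rw [← hc2]
        rw [hc]; exact hcS
      · exfalso
        apply hcw
        rw [mem_cNbr_KmPn]
        right
        refine ⟨Ne.symm hne', ?_⟩
        show (c.2 : ℕ) + 1 = j - 3 ∨ (j - 3) + 1 = (c.2 : ℕ)
        omega
  -- constraint (E): separate (i,j+1) from (i,j+3)
  have conE : ∀ i : Fin m, i ∈ rowSet S cp1 ∨ ∃ t, t ∈ rowSet S c0 ∧ t ≠ i := by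
    intro i
    obtain ⟨c, hcv, hcS, hcw⟩ := sep_of_isSID hS (i, cp1) (i, (⟨j + 3, by omega⟩ : Fin n))
      (by intro h
          have hv : ((⟨j + 3, by omega⟩ : Fin n) : ℕ) = (cp1 : ℕ) :=
            congrArg (fun p : Fin m × Fin n => (p.2 : ℕ)) h
          have : j + 3 = j + 1 := hv
          omega)
    rw [mem_cNbr_KmPn] at hcv
    rcases hcv with rfl | ⟨hne, hcol⟩
    · exact Or.inl (mem_rowSet.mpr hcS)
    · have hne' : i ≠ c.1 := hne
      have hcol' : (j + 1) + 1 = (c.2 : ℕ) ∨ (c.2 : ℕ) + 1 = j + 1 := hcol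
      rcases hcol' with h1 | h1
      · exfalso
        apply hcw
        rw [mem_cNbr_KmPn]
        right
        refine ⟨Ne.symm hne', ?_⟩
        show (c.2 : ℕ) + 1 = j + 3 ∨ (j + 3) + 1 = (c.2 : ℕ)
        omega
      · right
        have hc2 : c.2 = c0 := Fin.ext (show (c.2 : ℕ) = j by omega)
        refine ⟨c.1, mem_rowSet.mpr ?_, Ne.symm hne'⟩
        have hc : (c.1, c0) = c := by rw [← hc2]
        rw [hc]; exact hcS
  -- constraint (H): separate (i,j) from (i',j+1)
  have conH : ∀ i i' : Fin m, i ≠ i' →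
      (∃ t, t ∈ rowSet S cm1 ∧ t ≠ i) ∨
      (∃ t, t ∈ rowSet S cp1 ∧ t ≠ i ∧ t ≠ i') := by
    intro i i' hii'
    obtain ⟨c, hcv, hcS, hcw⟩ := sep_of_isSID hS (i, c0) (i', cp1)
      (by intro h
          have hv : (cp1 : ℕ) = (c0 : ℕ) :=
            congrArg (fun p : Fin m × Fin n => (p.2 : ℕ)) h
          have : j + 1 = j := hv
          omega)
    rw [mem_cNbr_KmPn] at hcv
    rcases hcv with rfl | ⟨hne, hcol⟩
    · exfalso
      apply hcw
      rw [mem_cNbr_KmPn]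
      right
      refine ⟨hii', ?_⟩
      show j + 1 = j + 1 ∨ (j + 1) + 1 = j
      omega
    · have hne' : i ≠ c.1 := hne
      have hcol' : j + 1 = (c.2 : ℕ) ∨ (c.2 : ℕ) + 1 = j := hcol
      rcases hcol' with h1 | h1
      · have hc2 : c.2 = cp1 := Fin.ext (show (c.2 : ℕ) = j + 1 by omega)
        by_cases hci' : c.1 = i'
        · exfalso
          apply hcw
          rw [mem_cNbr_KmPn]
          left
          rw [← hci', ← hc2]
        · right
          refine ⟨c.1, mem_rowSet.mpr ?_, Ne.symm hne', hci'⟩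
          have hc : (c.1, cp1) = c := by rw [← hc2]
          rw [hc]; exact hcS
      · left
        have hc2 : c.2 = cm1 := Fin.ext (show (c.2 : ℕ) = j - 1 by omega)
        refine ⟨c.1, mem_rowSet.mpr ?_, Ne.symm hne'⟩
        have hc : (c.1, cm1) = c := by rw [← hc2]
        rw [hc]; exact hcS
  -- the counting lemma
  have hkey := keyCount m hm (rowSet S cm1) (rowSet S c0) (rowSet S cp1)
    conA conB conC conD conE conH
  -- assemble: the union of the three column-images has card = sum, and sits inside the target
  set U : Finset (Fin m × Fin n) :=
    ((rowSet S cm1).image (fun r => (r, cm1)) ∪ (rowSet S c0).image (fun r => (r, c0))) ∪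
      (rowSet S cp1).image (fun r => (r, cp1)) with hUdef
  have hinj : ∀ q : Fin n, Function.Injective (fun r : Fin m => (r, q)) :=
    fun q x y h => congrArg Prod.fst h
  have hdisj : ∀ (q q' : Fin n) (A' B' : Finset (Fin m)), (q : ℕ) ≠ (q' : ℕ) →
      Disjoint (A'.image (fun r => (r, q))) (B'.image (fun r => (r, q'))) := by
    intro q q' A' B' hqq'
    rw [Finset.disjoint_left]
    intro p hp1 hp2
    simp only [Finset.mem_image] at hp1 hp2
    obtain ⟨r1, -, hpe1⟩ := hp1
    obtain ⟨r2, -, hpe2⟩ := hp2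
    apply hqq'
    have : (r1, q) = (r2, q') := by rw [hpe1, ← hpe2]
    exact congrArg (fun p : Fin m × Fin n => (p.2 : ℕ)) this
  have hd1 : Disjoint ((rowSet S cm1).image (fun r => (r, cm1)))
      ((rowSet S c0).image (fun r => (r, c0))) :=
    hdisj _ _ _ _ (show j - 1 ≠ j by omega)
  have hd2 : Disjoint
      (((rowSet S cm1).image (fun r => (r, cm1))) ∪ ((rowSet S c0).image (fun r => (r, c0))))
      ((rowSet S cp1).image (fun r => (r, cp1))) := by
    rw [Finset.disjoint_union_left]
    exact ⟨hdisj _ _ _ _ (show j - 1 ≠ j + 1 by omega),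
      hdisj _ _ _ _ (show j ≠ j + 1 by omega)⟩
  have hUcard : U.card = (rowSet S cm1).card + (rowSet S c0).card + (rowSet S cp1).card := by
    rw [hUdef, Finset.card_union_of_disjoint hd2, Finset.card_union_of_disjoint hd1,
      Finset.card_image_of_injective _ (hinj cm1), Finset.card_image_of_injective _ (hinj c0),
      Finset.card_image_of_injective _ (hinj cp1)]
  have hsub : (↑U : Set (Fin m × Fin n)) ⊆
      (({p : Fin m × Fin n | p.2 = cm1} ∪ {p : Fin m × Fin n | p.2 = c0} ∪
        {p : Fin m × Fin n | p.2 = cp1}) ∩ S) := by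
    intro p hp
    rw [Finset.mem_coe, hUdef] at hp
    simp only [Finset.mem_union, Finset.mem_image] at hp
    rcases hp with (⟨r, hr, rfl⟩ | ⟨r, hr, rfl⟩) | ⟨r, hr, rfl⟩
    · exact ⟨Or.inl (Or.inl rfl), mem_rowSet.mp hr⟩
    · exact ⟨Or.inl (Or.inr rfl), mem_rowSet.mp hr⟩
    · exact ⟨Or.inr rfl, mem_rowSet.mp hr⟩
  calc m + 2 ≤ (rowSet S cm1).card + (rowSet S c0).card + (rowSet S cp1).card := hkey
    _ = U.card := hUcard.symm
    _ = (↑U : Set (Fin m × Fin n)).ncard := (Set.ncard_coe_finset U).symm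
    _ ≤ _ := Set.ncard_le_ncard hsub (Set.toFinite _)
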